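/- With g_N^m defined by the alternating-sum (cumulant) formula g_N^m(Z_m) = Σ_{k=1}^m (-1)^{m-k} Σ_{σ ∈ 𝔖_m^k} (f_N^{(k)}/M_β^{⊗k})(Z_σ), and assuming ∫ f_N dZ_N = 0, each cumulant is mean-free in every variable: for each 1 ≤ ℓ ≤ m, ∫ g_N^m(Z_m) M_β(v_ℓ) dz_ℓ = 0. -/

import Mathlib

open MeasureTheory

noncomputable section

/-- The one-particle phase space `D = 𝕋² × ℝ²`. -/
abbrev Dom : Type := (AddCircle (1 : ℝ) × AddCircle (1 : ℝ)) × EuclideanSpace ℝ (Fin 2)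

/-- The Maxwellian `M_β(v) = (β/2π) exp(-β|v|²/2)`. -/
def Mβ (β : ℝ) (v : EuclideanSpace ℝ (Fin 2)) : ℝ :=
  (β / (2 * Real.pi)) * Real.exp (-β * ‖v‖ ^ 2 / 2)

/-- The product Maxwellian `M_β^{⊗n}`. -/
def Mprod (β : ℝ) {n : ℕ} (Z : Fin n → Dom) : ℝ := ∏ i, Mβ β (Z i).2

/-- Symmetry under permutation of the particles. -/
def IsSymmFn {n : ℕ} (f : (Fin n → Dom) → ℝ) : Prop :=
  ∀ (π : Equiv.Perm (Fin n)) (Z : Fin n → Dom), f (Z ∘ π) = f Z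

/-- The `s`-th marginal `f_N^{(s)}(Z_s) = ∫ f_N(Z_s, z_{s+1}, …, z_N) dz_{s+1} … dz_N`
(defined to be `0` for `s > N`). -/
def marg (N : ℕ) (f : (Fin N → Dom) → ℝ) (s : ℕ) (Zs : Fin s → Dom) : ℝ :=
  if h : s ≤ N then
    ∫ W : Fin (N - s) → Dom, f (fun i => Fin.append Zs W (Fin.cast (by omega) i))
  else 0

/-- For `σ ⊆ {1,…,s}`, the restricted configuration `Z_σ` (listed in increasing order). -/
def restrictF {s : ℕ} (Zs : Fin s → Dom) (σ : Finset (Fin s)) : Fin σ.card → Dom :=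
  fun j => Zs ((σ.orderIsoOfFin rfl j : Fin s))

/-- The cumulant `g_N^m(Z_m) := Σ_{k=1}^m (-1)^{m-k} Σ_{σ ∈ 𝔖_m^k} (f_N^{(k)}/M_β^{⊗k})(Z_σ)`. -/
def cumul (β : ℝ) (N : ℕ) (f : (Fin N → Dom) → ℝ) (m : ℕ) (Zm : Fin m → Dom) : ℝ :=
  ∑ σ ∈ Finset.univ.powerset.filter (fun σ : Finset (Fin m) => σ.Nonempty),
    (-1 : ℝ) ^ (m - σ.card) *
      (marg N f σ.card (restrictF Zm σ) / Mprod β (restrictF Zm σ))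

instance : IsProbabilityMeasure (volume : Measure (AddCircle (1:ℝ))) :=
  ⟨by rw [AddCircle.measure_univ]; norm_num⟩

instance : SigmaFinite (volume : Measure Dom) := by
  rw [MeasureTheory.Measure.volume_eq_prod]; infer_instance

abbrev PDom (n : ℕ) : Type := Fin n → Dom

/-- reindexing along an equality of lengths -/
def castE {n n' : ℕ} (h : n = n') : PDom n ≃ᵐ PDom n' :=
  MeasurableEquiv.piCongrLeft (fun _ => Dom) (finCongr h)

lemma castE_apply {n n' : ℕ} (h : n = n') (Y : PDom n) (i : Fin n') :
    castE h Y i = Y (Fin.cast h.symm i) := by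
  have : i = finCongr h (Fin.cast h.symm i) := rfl
  conv_lhs => rw [this]
  exact MeasurableEquiv.piCongrLeft_apply_apply (β := fun _ : Fin n' => Dom) (finCongr h) Y (Fin.cast h.symm i)

lemma castE_mp {n n' : ℕ} (h : n = n') : MeasurePreserving (castE h) volume volume :=
  volume_measurePreserving_piCongrLeft (fun _ => Dom) (finCongr h)

def splitE (a b : ℕ) : (PDom a × PDom b) ≃ᵐ PDom (a + b) :=
  (MeasurableEquiv.sumPiEquivProdPi (fun _ : Fin a ⊕ Fin b => Dom)).symm.trans
    (MeasurableEquiv.piCongrLeft (fun _ => Dom) finSumFinEquiv)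

lemma splitE_apply {a b : ℕ} (Y : PDom a) (W : PDom b) :
    splitE a b (Y, W) = Fin.append Y W := by
  funext i
  refine Fin.addCases (fun j => ?_) (fun j => ?_) i
  · rw [Fin.append_left]
    show MeasurableEquiv.piCongrLeft (fun _ => Dom) finSumFinEquiv
      ((MeasurableEquiv.sumPiEquivProdPi _).symm (Y, W)) (Fin.castAdd b j) = Y j
    rw [show (Fin.castAdd b j) = finSumFinEquiv (Sum.inl j) from rfl,
      MeasurableEquiv.piCongrLeft_apply_apply]
    rfl
  · rw [Fin.append_right]
    show MeasurableEquiv.piCongrLeft (fun _ => Dom) finSumFinEquiv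
      ((MeasurableEquiv.sumPiEquivProdPi _).symm (Y, W)) (Fin.natAdd a j) = W j
    rw [show (Fin.natAdd a j) = finSumFinEquiv (Sum.inr j) from rfl,
      MeasurableEquiv.piCongrLeft_apply_apply]
    rfl

lemma splitE_mp (a b : ℕ) :
    MeasurePreserving (splitE a b) ((volume : Measure (PDom a)).prod volume) volume :=
  (volume_measurePreserving_piCongrLeft (fun _ => Dom) finSumFinEquiv).comp
    (volume_measurePreserving_sumPiEquivProdPi_symm (fun _ : Fin a ⊕ Fin b => Dom))

variable {N : ℕ} {f : PDom N → ℝ}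

/-- the full reassembly equivalence -/
def asmE (s : ℕ) (hs : s ≤ N) : (PDom s × PDom (N - s)) ≃ᵐ PDom N :=
  (splitE s (N - s)).trans (castE (by omega))

lemma asmE_mp (s : ℕ) (hs : s ≤ N) :
    MeasurePreserving (asmE (N := N) s hs) ((volume : Measure (PDom s)).prod volume) volume := by
  rw [asmE, MeasurableEquiv.coe_trans]
  exact (castE_mp _).comp (splitE_mp s (N - s))

lemma asmE_apply (s : ℕ) (hs : s ≤ N) (Zs : PDom s) (W : PDom (N - s)) :
    asmE s hs (Zs, W) = fun i => Fin.append Zs W (Fin.cast (by omega) i) := by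
  funext i
  rw [asmE, MeasurableEquiv.trans_apply, castE_apply, splitE_apply]

lemma marg_eq (hs : s ≤ N) (Zs : PDom s) :
    marg N f s Zs = ∫ W : PDom (N - s), f (asmE s hs (Zs, W)) := by
  rw [marg, dif_pos hs]
  congr 1
  funext W
  rw [asmE_apply]

lemma integrable_asm (hf : Integrable f) (s : ℕ) (hs : s ≤ N) :
    Integrable (fun p : PDom s × PDom (N - s) => f (asmE s hs p))
      ((volume : Measure (PDom s)).prod volume) :=
  ((asmE_mp s hs).integrable_comp_emb (asmE s hs).measurableEmbedding).2 hf

lemma marg_cast {s s' : ℕ} (h : s = s') (Zs : PDom s') :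
    marg N f s (Zs ∘ Fin.cast h) = marg N f s' Zs := by
  subst h; rfl

lemma marg_zero (hN : 0 < N) (hmean : ∫ Z : PDom N, f Z = 0) (Z0 : PDom 0) :
    marg N f 0 Z0 = 0 := by
  rw [marg_eq (Nat.zero_le N)]
  have : ∀ W : PDom (N - 0), asmE 0 (Nat.zero_le N) (Z0, W) = castE (by omega) W := by
    intro W
    funext i
    rw [asmE_apply]
    beta_reduce
    rw [castE_apply]
    have : Fin.cast (by omega : N = 0 + (N - 0)) i
        = Fin.natAdd 0 (Fin.cast (by omega : N = N - 0) i) := by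
      apply Fin.ext; simp
    rw [this, Fin.append_right]
  simp_rw [this]
  rw [(castE_mp (by omega : N - 0 = N)).integral_comp']
  exact hmean

lemma marg_symm (hsym : IsSymmFn f) {s : ℕ} (hs : s ≤ N) (π : Equiv.Perm (Fin s))
    (Zs : PDom s) : marg N f s (Zs ∘ π) = marg N f s Zs := by
  rw [marg, dif_pos hs, marg, dif_pos hs]
  congr 1
  funext W
  have key : ∀ h : N = s + (N - s),
      (fun i => Fin.append (Zs ∘ π) W (Fin.cast h i)) =
        (fun i => Fin.append Zs W (Fin.cast h i)) ∘
          ((finCongr h).trans (((finSumFinEquiv.symm.trans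
            ((Equiv.sumCongr π (Equiv.refl (Fin (N - s)))).trans finSumFinEquiv))).trans
              (finCongr h.symm))) := by
    intro h
    funext i
    have base : ∀ j : Fin (s + (N - s)), Fin.append (Zs ∘ π) W j =
        Fin.append Zs W (finSumFinEquiv ((Equiv.sumCongr π (Equiv.refl (Fin (N - s))))
          (finSumFinEquiv.symm j))) := by
      intro j
      refine Fin.addCases (fun j0 => ?_) (fun j0 => ?_) j
      · simp [Fin.append_left]
      · simp [Fin.append_right]
    have hτ : Fin.cast h (((finCongr h).trans (((finSumFinEquiv.symm.trans
            ((Equiv.sumCongr π (Equiv.refl (Fin (N - s)))).trans finSumFinEquiv))).trans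
              (finCongr h.symm))) i) =
        finSumFinEquiv ((Equiv.sumCongr π (Equiv.refl (Fin (N - s))))
          (finSumFinEquiv.symm (Fin.cast h i))) := by
      apply Fin.ext
      simp
    show Fin.append (Zs ∘ π) W (Fin.cast h i) = Fin.append Zs W (Fin.cast h _)
    rw [hτ]
    exact base (Fin.cast h i)
  rw [key]
  exact hsym _ _

lemma update_eq_insertNth {k : ℕ} (Y : PDom (k + 1)) (p : Fin (k + 1)) (z : Dom) :
    Function.update Y p z = Fin.insertNth p z (fun j => Y (p.succAbove j)) := by
  funext i
  refine Fin.succAboveCases p ?_ (fun j => ?_) i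
  · simp
  · rw [Function.update_of_ne (Fin.succAbove_ne p j), Fin.insertNth_apply_succAbove]

lemma insertNth_eq_snoc_comp {k : ℕ} (p : Fin (k + 1)) (z : Dom) (V : PDom k) :
    ∃ ρ : Equiv.Perm (Fin (k + 1)), Fin.insertNth p z V = Fin.snoc V z ∘ ρ := by
  refine ⟨(finSuccEquiv' p).trans (finSuccEquiv' (Fin.last k)).symm, ?_⟩
  funext i
  refine Fin.succAboveCases p ?_ (fun j => ?_) i
  · simp
  · rw [Fin.insertNth_apply_succAbove]
    have : ((finSuccEquiv' p).trans (finSuccEquiv' (Fin.last k)).symm) (p.succAbove j)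
        = Fin.castSucc j := by
      simp [finSuccEquiv'_succAbove, Fin.succAbove_last]
    simp [this]

lemma Mprod_insertNth {β : ℝ} {k : ℕ} (p : Fin (k + 1)) (z : Dom) (V : PDom k) :
    Mprod β (Fin.insertNth p z V) = Mβ β z.2 * Mprod β V := by
  rw [Mprod, Fin.prod_univ_succAbove _ p]
  simp [Mprod]

lemma Mprod_cast {β : ℝ} {s s' : ℕ} (h : s = s') (Zs : PDom s') :
    Mprod β (Zs ∘ Fin.cast h) = Mprod β Zs := by
  subst h; rfl

/-- decomposition of the tail `PDom (N - k)` into `Dom × PDom (N - (k+1))`. -/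
def tailE {N k : ℕ} (hk : k + 1 ≤ N) : (Dom × PDom (N - (k + 1))) ≃ᵐ PDom (N - k) :=
  (MeasurableEquiv.piFinSuccAbove (fun _ : Fin ((N - (k + 1)) + 1) => Dom) 0).symm.trans
    (castE (by omega))

lemma tailE_mp {N k : ℕ} (hk : k + 1 ≤ N) :
    MeasurePreserving (tailE hk) ((volume : Measure Dom).prod volume) volume := by
  rw [tailE, MeasurableEquiv.coe_trans]
  exact (castE_mp _).comp
    (volume_preserving_piFinSuccAbove (fun _ : Fin ((N - (k + 1)) + 1) => Dom) 0).symm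

lemma tailE_apply {N k : ℕ} (hk : k + 1 ≤ N) (z : Dom) (W : PDom (N - (k + 1))) :
    tailE hk (z, W) = (Fin.cons z W) ∘ Fin.cast (by omega : N - k = (N - (k+1)) + 1) := by
  funext j
  rw [tailE, MeasurableEquiv.trans_apply, castE_apply]
  show ((MeasurableEquiv.piFinSuccAbove (fun _ : Fin ((N - (k + 1)) + 1) => Dom) 0).symm
    (z, W)) _ = _
  rw [MeasurableEquiv.piFinSuccAbove_symm_apply]
  simp only [Fin.insertNthEquiv_apply, Fin.insertNth_zero']
  rfl

/-- key compatibility: appending after snoc -/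
lemma asm_snoc {N k : ℕ} (hk : k + 1 ≤ N) (Y : PDom k) (z : Dom) (W : PDom (N - (k + 1))) :
    asmE (N := N) k (le_of_lt hk) (Y, tailE hk (z, W))
      = asmE (N := N) (k + 1) hk (Fin.snoc Y z, W) := by
  funext i
  rw [asmE_apply, asmE_apply]
  beta_reduce
  rw [tailE_apply, Fin.append_cast_right, Fin.append_right_cons, Fin.append_left_snoc]
  simp only [Function.comp_apply]
  congr 1

/-- Central Fubini step: integrating out the last variable of the `(k+1)`-st marginal. -/
lemma marg_step (hf : Integrable f) {k : ℕ} (hk : k + 1 ≤ N) :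
    ∀ᵐ Y : PDom k, Integrable (fun z : Dom => marg N f (k + 1) (Fin.snoc Y z)) ∧
      ∫ z : Dom, marg N f (k + 1) (Fin.snoc Y z) = marg N f k Y := by
  have hG : Integrable (fun p : PDom k × PDom (N - k) => f (asmE k (le_of_lt hk) p))
      ((volume : Measure (PDom k)).prod volume) := integrable_asm hf _ _
  filter_upwards [hG.prod_right_ae] with Y hY
  -- hY : Integrable (fun W => f (asmE k _ (Y, W)))
  have hYD : Integrable (fun q : Dom × PDom (N - (k + 1)) => f (asmE k (le_of_lt hk) (Y, tailE hk q)))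
      ((volume : Measure Dom).prod volume) :=
    ((tailE_mp hk).integrable_comp_emb (tailE hk).measurableEmbedding).2 hY
  have key : ∀ q : Dom × PDom (N - (k + 1)),
      f (asmE k (le_of_lt hk) (Y, tailE hk q)) = f (asmE (k + 1) hk (Fin.snoc Y q.1, q.2)) :=
    fun q => by rw [asm_snoc hk Y q.1 q.2]
  constructor
  · have : (fun z : Dom => marg N f (k + 1) (Fin.snoc Y z))
        = fun z : Dom => ∫ W' : PDom (N - (k + 1)), f (asmE k (le_of_lt hk) (Y, tailE hk (z, W'))) := by
      funext z
      rw [marg_eq hk]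
      congr 1
      funext W'
      exact (key (z, W')).symm
    rw [this]
    exact hYD.integral_prod_left
  · have h1 : marg N f k Y = ∫ W : PDom (N - k), f (asmE k (le_of_lt hk) (Y, W)) :=
      marg_eq (le_of_lt hk) Y
    have h2 : ∫ W : PDom (N - k), f (asmE k (le_of_lt hk) (Y, W))
        = ∫ q : Dom × PDom (N - (k + 1)), f (asmE k (le_of_lt hk) (Y, tailE hk q)) :=
      ((tailE_mp hk).integral_comp' (fun W => f (asmE k (le_of_lt hk) (Y, W)))).symm
    have h3 : ∫ q : Dom × PDom (N - (k + 1)), f (asmE k (le_of_lt hk) (Y, tailE hk q))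
        = ∫ z : Dom, ∫ W' : PDom (N - (k + 1)), f (asmE k (le_of_lt hk) (Y, tailE hk (z, W'))) :=
      integral_prod _ hYD
  
    rw [h1, h2, h3]
    congr 1
    funext z
    rw [marg_eq hk]
    congr 1
    funext W'
    exact (key (z, W')).symm

lemma restrict_update_not_mem {m : ℕ} (Zm : PDom m) (σ : Finset (Fin m)) {ℓ : Fin m}
    (hℓ : ℓ ∉ σ) (z : Dom) : restrictF (Function.update Zm ℓ z) σ = restrictF Zm σ := by
  funext j
  have hmem : ((σ.orderIsoOfFin rfl j : σ) : Fin m) ∈ σ := (σ.orderIsoOfFin rfl j).2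
  exact Function.update_of_ne (fun h => hℓ (by rw [← h]; exact hmem)) _ _

lemma restrict_update_mem {m : ℕ} (Zm : PDom m) (σ : Finset (Fin m)) {ℓ : Fin m}
    (hℓ : ℓ ∈ σ) (z : Dom) :
    restrictF (Function.update Zm ℓ z) σ
      = Function.update (restrictF Zm σ) ((σ.orderIsoOfFin rfl).symm ⟨ℓ, hℓ⟩) z := by
  funext j
  by_cases hj : j = (σ.orderIsoOfFin rfl).symm ⟨ℓ, hℓ⟩
  · subst hj
    have h1 : (σ.orderIsoOfFin rfl ((σ.orderIsoOfFin rfl).symm ⟨ℓ, hℓ⟩) : Fin m) = ℓ := by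
      rw [OrderIso.apply_symm_apply]
    rw [Function.update_self, restrictF, h1, Function.update_self]
  · have h2 : (σ.orderIsoOfFin rfl j : Fin m) ≠ ℓ := by
      intro h
      exact hj (by rw [← (σ.orderIsoOfFin rfl).symm_apply_apply j]; congr 1; exact Subtype.ext h)
    rw [restrictF]
    beta_reduce
    rw [Function.update_of_ne h2, Function.update_of_ne hj]
    rfl

lemma restrict_erase {m : ℕ} (Zm : PDom m) (σ : Finset (Fin m)) {ℓ : Fin m} (hℓ : ℓ ∈ σ)
    {r : ℕ} (hr : σ.card = r + 1) (hre : (σ.erase ℓ).card = r) :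
    restrictF Zm (σ.erase ℓ)
      = (fun j : Fin (r + 1) => restrictF Zm σ (Fin.cast hr.symm j)) ∘
          (Fin.cast hr ((σ.orderIsoOfFin rfl).symm ⟨ℓ, hℓ⟩)).succAbove ∘ Fin.cast hre := by
  set p : Fin (r + 1) := Fin.cast hr ((σ.orderIsoOfFin rfl).symm ⟨ℓ, hℓ⟩) with hp
  have hℓeq : σ.orderEmbOfFin rfl ((σ.orderIsoOfFin rfl).symm ⟨ℓ, hℓ⟩) = ℓ := by
    rw [← Finset.coe_orderIsoOfFin_apply, OrderIso.apply_symm_apply]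
  have hmemb : ∀ j : Fin ((σ.erase ℓ).card),
      (fun j => σ.orderEmbOfFin rfl (Fin.cast hr.symm (p.succAbove (Fin.cast hre j)))) j
        ∈ σ.erase ℓ := by
    intro j
    rw [Finset.mem_erase]
    refine ⟨?_, Finset.orderEmbOfFin_mem σ rfl _⟩
    intro h
    have h' : σ.orderEmbOfFin rfl (Fin.cast hr.symm (p.succAbove (Fin.cast hre j))) = ℓ := h
    have h2 := (σ.orderEmbOfFin rfl).injective (h'.trans hℓeq.symm)
    have h3 : p.succAbove (Fin.cast hre j) = p := by
      apply Fin.ext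
      have := congrArg Fin.val h2
      simpa [hp] using this
    exact Fin.succAbove_ne p (Fin.cast hre j) h3
  have hmono : StrictMono (fun j : Fin ((σ.erase ℓ).card) =>
      σ.orderEmbOfFin rfl (Fin.cast hr.symm (p.succAbove (Fin.cast hre j)))) := by
    intro a b hab
    apply (σ.orderEmbOfFin rfl).strictMono
    exact Fin.strictMono_succAbove p (show Fin.cast hre a < Fin.cast hre b from hab)
  have huniq := Finset.orderEmbOfFin_unique
    (rfl : (σ.erase ℓ).card = (σ.erase ℓ).card) hmemb hmono
  funext j
  have hgj := (congrFun huniq j).symm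
  -- hgj : (σ.erase ℓ).orderEmbOfFin rfl j = σ.orderEmbOfFin rfl (cast ...)
  rw [← Finset.coe_orderIsoOfFin_apply, ← Finset.coe_orderIsoOfFin_apply] at hgj
  show Zm _ = Zm _
  exact congrArg Zm hgj

lemma comp_inj_ae {r m : ℕ} (g : Fin r → Fin m) (hg : Function.Injective g)
    {P : PDom r → Prop} (h : ∀ᵐ Y : PDom r, P Y) :
    ∀ᵐ Zm : PDom m, P (Zm ∘ g) := by
  classical
  have hrm : r ≤ m := by
    have := Fintype.card_le_of_injective g hg
    simpa using this
  set s : Finset (Fin m) := Finset.image g Finset.univ with hs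
  have hcard : s.card = r := by
    rw [hs, Finset.card_image_of_injective _ hg, Finset.card_univ, Fintype.card_fin]
  have hccard : sᶜ.card = m - r := by
    rw [Finset.card_compl, hcard, Fintype.card_fin]
  set h0 : Fin r ⊕ Fin (m - r) → Fin m :=
    Sum.elim g (fun j => sᶜ.orderEmbOfFin hccard j) with hh0
  have hinj : Function.Injective h0 := by
    intro a b hab
    match a, b with
    | Sum.inl a, Sum.inl b => exact congrArg Sum.inl (hg hab)
    | Sum.inr a, Sum.inr b =>
      exact congrArg Sum.inr ((sᶜ.orderEmbOfFin hccard).injective hab)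
    | Sum.inl a, Sum.inr b =>
      exfalso
      have h1 : g a ∈ s := Finset.mem_image_of_mem g (Finset.mem_univ a)
      have h2 : sᶜ.orderEmbOfFin hccard b ∈ sᶜ := Finset.orderEmbOfFin_mem _ _ _
      rw [Finset.mem_compl] at h2
      have hab' : g a = sᶜ.orderEmbOfFin hccard b := hab
      exact h2 (hab' ▸ h1)
    | Sum.inr a, Sum.inl b =>
      exfalso
      have h1 : g b ∈ s := Finset.mem_image_of_mem g (Finset.mem_univ b)
      have h2 : sᶜ.orderEmbOfFin hccard a ∈ sᶜ := Finset.orderEmbOfFin_mem _ _ _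
      rw [Finset.mem_compl] at h2
      have hab' : sᶜ.orderEmbOfFin hccard a = g b := hab
      exact h2 (hab'.symm ▸ h1)
  have hbij : Function.Bijective h0 := by
    rw [Fintype.bijective_iff_injective_and_card]
    exact ⟨hinj, by simp [Nat.add_sub_cancel' hrm]⟩
  set E : Fin r ⊕ Fin (m - r) ≃ Fin m := Equiv.ofBijective h0 hbij with hE
  set Φ : PDom m ≃ᵐ ((Fin r → Dom) × (Fin (m - r) → Dom)) :=
    (MeasurableEquiv.piCongrLeft (fun _ => Dom) E).symm.trans
      (MeasurableEquiv.sumPiEquivProdPi (fun _ : Fin r ⊕ Fin (m - r) => Dom)) with hΦ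
  have hΦmp : MeasurePreserving Φ volume ((volume : Measure (PDom r)).prod volume) := by
    rw [hΦ, MeasurableEquiv.coe_trans]
    exact (volume_measurePreserving_sumPiEquivProdPi (fun _ : Fin r ⊕ Fin (m - r) => Dom)).comp
      (volume_measurePreserving_piCongrLeft (fun _ => Dom) E).symm
  have hfst : ∀ Zm : PDom m, (Φ Zm).1 = Zm ∘ g := by
    intro Zm
    funext j
    show ((MeasurableEquiv.sumPiEquivProdPi (fun _ : Fin r ⊕ Fin (m - r) => Dom))
      ((MeasurableEquiv.piCongrLeft (fun _ => Dom) E).symm Zm)).1 j = Zm (g j)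
    have h1 : ((MeasurableEquiv.piCongrLeft (fun _ => Dom) E).symm Zm) (Sum.inl j)
        = Zm (E (Sum.inl j)) := by
      show ((Equiv.piCongrLeft (fun _ => Dom) E).symm Zm) (Sum.inl j) = Zm (E (Sum.inl j))
      rw [Equiv.piCongrLeft_symm_apply]
    exact h1
  -- transfer the null set
  rw [ae_iff] at h ⊢
  obtain ⟨B, hsub, hBmeas, hBnull⟩ := exists_measurable_superset_of_null h
  have hsubset : {Zm : PDom m | ¬P (Zm ∘ g)} ⊆ Φ ⁻¹' (B ×ˢ Set.univ) := by
    intro Zm hZm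
    simp only [Set.mem_preimage, Set.mem_prod, Set.mem_univ, and_true]
    exact hsub (by rw [hfst Zm]; exact hZm)
  refine measure_mono_null hsubset ?_
  rw [hΦmp.measure_preimage (hBmeas.prod MeasurableSet.univ).nullMeasurableSet,
    Measure.prod_prod, hBnull, zero_mul]

lemma Mβ_pos {β : ℝ} (hβ : 0 < β) (v : EuclideanSpace ℝ (Fin 2)) : 0 < Mβ β v := by
  have := Real.pi_pos
  exact mul_pos (by positivity) (Real.exp_pos _)

lemma Mprod_pos {β : ℝ} (hβ : 0 < β) {n : ℕ} (Z : PDom n) : 0 < Mprod β Z :=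
  Finset.prod_pos fun i _ => Mβ_pos hβ _

lemma Mβ_eq (β : ℝ) (v : EuclideanSpace ℝ (Fin 2)) :
    Mβ β v = (β / (2 * Real.pi)) * Real.exp (-(β/2) * ‖v‖ ^ 2) := by
  rw [Mβ]; ring_nf

lemma integrable_Mβ {β : ℝ} (hβ : 0 < β) : Integrable (Mβ β) := by
  have he : Mβ β = fun v => (β / (2 * Real.pi)) * Real.exp (-(β/2) * ‖v‖ ^ 2) :=
    funext (Mβ_eq β)
  rw [he]
  refine Integrable.const_mul ?_ _
  have := GaussianFourier.integrable_cexp_neg_mul_sq_norm_add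
      (V := EuclideanSpace ℝ (Fin 2)) (b := ((β/2 : ℝ) : ℂ)) (by simpa using half_pos hβ) 0 0
  have h2 := this.re
  simpa [Complex.exp_ofReal_re, ← Complex.ofReal_pow, ← Complex.ofReal_mul,
    ← Complex.ofReal_neg, neg_mul, ← Complex.ofReal_ofNat, ← Complex.ofReal_div,
    ← Complex.exp_ofReal_re] using h2

lemma integral_Mβ_vol {β : ℝ} (hβ : 0 < β) : ∫ v : EuclideanSpace ℝ (Fin 2), Mβ β v = 1 := by
  simp_rw [Mβ_eq]
  rw [integral_const_mul, GaussianFourier.integral_rexp_neg_mul_sq_norm (half_pos hβ)]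
  have : (Module.finrank ℝ (EuclideanSpace ℝ (Fin 2)) / 2 : ℝ) = 1 := by
    simp [finrank_euclideanSpace]
  rw [this, Real.rpow_one]
  have := Real.pi_pos
  field_simp

lemma integrable_Mβ_Dom {β : ℝ} (hβ : 0 < β) : Integrable (fun z : Dom => Mβ β z.2) := by
  have : (fun z : Dom => Mβ β z.2)
      = fun z : Dom => (fun _ : AddCircle (1:ℝ) × AddCircle (1:ℝ) => (1:ℝ)) z.1 * Mβ β z.2 := by
    funext z; simp
  rw [this]
  exact (integrable_const (μ := (volume : Measure (AddCircle (1:ℝ) × AddCircle (1:ℝ)))) (1:ℝ)).mul_prod (integrable_Mβ hβ)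

lemma integral_Mβ_Dom {β : ℝ} (hβ : 0 < β) : ∫ z : Dom, Mβ β z.2 = 1 := by
  have : (fun z : Dom => Mβ β z.2)
      = fun z : Dom => (fun _ : AddCircle (1:ℝ) × AddCircle (1:ℝ) => (1:ℝ)) z.1 * Mβ β z.2 := by
    funext z; simp
  rw [this, MeasureTheory.Measure.volume_eq_prod,
    integral_prod_mul (fun _ : AddCircle (1:ℝ) × AddCircle (1:ℝ) => (1:ℝ)) (Mβ β)]
  simp [integral_Mβ_vol hβ]

lemma per_sigma {β : ℝ} (hβ : 0 < β) {N : ℕ} {f : PDom N → ℝ}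
    (hsym : IsSymmFn f) (hf : Integrable f)
    {m : ℕ} (hmN : m ≤ N) (ℓ : Fin m) (σ : Finset (Fin m)) (hℓ : ℓ ∈ σ) :
    ∀ᵐ Zm : PDom m,
      Integrable (fun z : Dom => Mβ β z.2 * ((-1:ℝ)^(m - σ.card) *
        (marg N f σ.card (restrictF (Function.update Zm ℓ z) σ) /
         Mprod β (restrictF (Function.update Zm ℓ z) σ)))) ∧
      ∫ z : Dom, Mβ β z.2 * ((-1:ℝ)^(m - σ.card) *
        (marg N f σ.card (restrictF (Function.update Zm ℓ z) σ) /
         Mprod β (restrictF (Function.update Zm ℓ z) σ)))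
        = (-1:ℝ)^(m - σ.card) * (marg N f (σ.erase ℓ).card (restrictF Zm (σ.erase ℓ)) /
            Mprod β (restrictF Zm (σ.erase ℓ))) := by
  classical
  set r : ℕ := (σ.erase ℓ).card with hrdef
  have hre : (σ.erase ℓ).card = r := rfl
  have hr : σ.card = r + 1 := (Finset.card_erase_add_one hℓ).symm
  have hcardm : σ.card ≤ m := by
    have := Finset.card_le_card (Finset.subset_univ σ)
    simpa using this
  have hkN : r + 1 ≤ N := by omega
  set pσ : Fin σ.card := (σ.orderIsoOfFin rfl).symm ⟨ℓ, hℓ⟩ with hpσ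
  set p : Fin (r + 1) := Fin.cast hr pσ with hpdef
  set g : Fin r → Fin m := fun j => σ.orderEmbOfFin rfl (Fin.cast hr.symm (p.succAbove j))
    with hgdef
  have hginj : Function.Injective g := by
    intro a b hab
    have h1 := (σ.orderEmbOfFin rfl).injective hab
    have h1v := congrArg Fin.val h1
    have h2 : p.succAbove a = p.succAbove b := Fin.ext h1v
    exact Fin.succAbove_right_injective h2
  have hstep := marg_step (f := f) hf hkN
  filter_upwards [comp_inj_ae g hginj hstep] with Zm hZ
  set Y : Fin σ.card → Dom := restrictF Zm σ with hY
  set Yc : PDom (r + 1) := fun jj => Y (Fin.cast hr.symm jj) with hYc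
  set V : PDom r := Zm ∘ g with hV
  have C2 : V = fun j => Yc (p.succAbove j) := by
    funext j
    show Zm (σ.orderEmbOfFin rfl (Fin.cast hr.symm (p.succAbove j))) = _
    rw [hYc]
    show _ = Y (Fin.cast hr.symm (p.succAbove j))
    rw [hY, restrictF]
    beta_reduce
    rw [Finset.coe_orderIsoOfFin_apply]
  have C1 : ∀ z : Dom, restrictF (Function.update Zm ℓ z) σ
      = (Function.update Yc p z) ∘ Fin.cast hr := by
    intro z
    rw [restrict_update_mem Zm σ hℓ z]
    funext j
    by_cases hj : j = pσ
    · subst hj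
      have : Fin.cast hr pσ = p := rfl
      rw [Function.update_self, Function.comp_apply, this, Function.update_self]
    · have hj2 : Fin.cast hr j ≠ p := by
        intro h
        have hv := congrArg Fin.val h
        exact hj (Fin.ext hv)
      rw [Function.comp_apply, Function.update_of_ne hj2, Function.update_of_ne hj, hYc]
      rfl
  have C3 : ∀ z : Dom, marg N f σ.card (restrictF (Function.update Zm ℓ z) σ)
      = marg N f (r + 1) (Fin.snoc V z) := by
    intro z
    rw [C1 z, marg_cast hr]
    rw [update_eq_insertNth (Yc) p z]
    have : (fun j => Yc (p.succAbove j)) = V := C2.symm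
    rw [this]
    obtain ⟨ρ, hρ⟩ := insertNth_eq_snoc_comp p z V
    rw [hρ, marg_symm hsym hkN ρ]
  have hVτ : restrictF Zm (σ.erase ℓ) = V ∘ Fin.cast hre := by
    rw [restrict_erase Zm σ hℓ hr hre, C2]
    rfl
  have C4 : ∀ z : Dom, Mprod β (restrictF (Function.update Zm ℓ z) σ)
      = Mβ β z.2 * Mprod β (restrictF Zm (σ.erase ℓ)) := by
    intro z
    rw [C1 z, Mprod_cast hr, update_eq_insertNth Yc p z, Mprod_insertNth]
    congr 1
    rw [hVτ, Mprod_cast hre, C2]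
  set Q : ℝ := Mprod β (restrictF Zm (σ.erase ℓ)) with hQ
  have hQpos : 0 < Q := Mprod_pos hβ _
  have C5 : ∀ z : Dom, Mβ β z.2 * ((-1:ℝ)^(m - σ.card) *
        (marg N f σ.card (restrictF (Function.update Zm ℓ z) σ) /
         Mprod β (restrictF (Function.update Zm ℓ z) σ)))
      = ((-1:ℝ)^(m - σ.card) / Q) * marg N f (r + 1) (Fin.snoc V z) := by
    intro z
    rw [C3 z, C4 z]
    have ha : Mβ β z.2 ≠ 0 := (Mβ_pos hβ z.2).ne'
    field_simp
  constructor
  · have : (fun z : Dom => Mβ β z.2 * ((-1:ℝ)^(m - σ.card) *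
        (marg N f σ.card (restrictF (Function.update Zm ℓ z) σ) /
         Mprod β (restrictF (Function.update Zm ℓ z) σ))))
        = fun z : Dom => ((-1:ℝ)^(m - σ.card) / Q) * marg N f (r + 1) (Fin.snoc V z) :=
      funext C5
    rw [this]
    exact hZ.1.const_mul _
  · calc ∫ z : Dom, Mβ β z.2 * ((-1:ℝ)^(m - σ.card) *
        (marg N f σ.card (restrictF (Function.update Zm ℓ z) σ) /
         Mprod β (restrictF (Function.update Zm ℓ z) σ)))
        = ∫ z : Dom, ((-1:ℝ)^(m - σ.card) / Q) * marg N f (r + 1) (Fin.snoc V z) := by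
          congr 1; funext z; exact C5 z
      _ = ((-1:ℝ)^(m - σ.card) / Q) * ∫ z : Dom, marg N f (r + 1) (Fin.snoc V z) :=
          integral_const_mul _ _
      _ = ((-1:ℝ)^(m - σ.card) / Q) * marg N f r V := by rw [hZ.2]
      _ = (-1:ℝ)^(m - σ.card) * (marg N f (σ.erase ℓ).card (restrictF Zm (σ.erase ℓ)) / Q) := by
          rw [hVτ, marg_cast hre]
          ring

/-- If `∫ f_N = 0` then each cumulant is mean-free in every variable:
for each `1 ≤ ℓ ≤ m`, `∫ g_N^m(Z_m) M_β(v_ℓ) dz_ℓ = 0`. -/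
theorem statement2 (β : ℝ) (hβ : 0 < β) (N : ℕ) (hN : 1 ≤ N)
    (f : (Fin N → Dom) → ℝ) (hsym : IsSymmFn f) (hint : Integrable f)
    (hmean : ∫ Z : Fin N → Dom, f Z = 0) :
    ∀ m, 1 ≤ m → m ≤ N → ∀ ℓ : Fin m,
      ∀ᵐ Zm : Fin m → Dom,
        ∫ z : Dom, Mβ β z.2 * cumul β N f m (Function.update Zm ℓ z) = 0 := by
  intro m hm1 hmN ℓ
  classical
  have hmain : ∀ σ : Finset (Fin m), ∀ᵐ Zm : PDom m, ℓ ∈ σ →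
      (Integrable (fun z : Dom => Mβ β z.2 * ((-1:ℝ)^(m - σ.card) *
        (marg N f σ.card (restrictF (Function.update Zm ℓ z) σ) /
         Mprod β (restrictF (Function.update Zm ℓ z) σ)))) ∧
      ∫ z : Dom, Mβ β z.2 * ((-1:ℝ)^(m - σ.card) *
        (marg N f σ.card (restrictF (Function.update Zm ℓ z) σ) /
         Mprod β (restrictF (Function.update Zm ℓ z) σ)))
        = (-1:ℝ)^(m - σ.card) * (marg N f (σ.erase ℓ).card (restrictF Zm (σ.erase ℓ)) /
            Mprod β (restrictF Zm (σ.erase ℓ)))) := by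
    intro σ
    by_cases hℓσ : ℓ ∈ σ
    · filter_upwards [per_sigma hβ hsym hint hmN ℓ σ hℓσ] with Zm h _
      exact h
    · filter_upwards with Zm h
      exact absurd h hℓσ
  filter_upwards [ae_all_iff.2 hmain] with Zm hZm
  set S : Finset (Finset (Fin m)) :=
    Finset.univ.powerset.filter (fun σ : Finset (Fin m) => σ.Nonempty) with hS
  set u : Finset (Fin m) → ℝ :=
    fun τ => marg N f τ.card (restrictF Zm τ) / Mprod β (restrictF Zm τ) with hu
  -- facts for σ not containing ℓ
  have hnm : ∀ σ, ℓ ∉ σ →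
      (Integrable (fun z : Dom => Mβ β z.2 * ((-1:ℝ)^(m - σ.card) *
        (marg N f σ.card (restrictF (Function.update Zm ℓ z) σ) /
         Mprod β (restrictF (Function.update Zm ℓ z) σ)))) ∧
      ∫ z : Dom, Mβ β z.2 * ((-1:ℝ)^(m - σ.card) *
        (marg N f σ.card (restrictF (Function.update Zm ℓ z) σ) /
         Mprod β (restrictF (Function.update Zm ℓ z) σ)))
        = (-1:ℝ)^(m - σ.card) * u σ) := by
    intro σ hℓσ
    have hres : (fun z : Dom => Mβ β z.2 * ((-1:ℝ)^(m - σ.card) *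
        (marg N f σ.card (restrictF (Function.update Zm ℓ z) σ) /
         Mprod β (restrictF (Function.update Zm ℓ z) σ))))
        = fun z : Dom => Mβ β z.2 * ((-1:ℝ)^(m - σ.card) * u σ) := by
      funext z
      rw [restrict_update_not_mem Zm σ hℓσ z]
    constructor
    · rw [hres]
      exact (integrable_Mβ_Dom hβ).mul_const _
    · rw [hres, integral_mul_const, integral_Mβ_Dom hβ, one_mul]
  have hIint : ∀ σ ∈ S, Integrable (fun z : Dom => Mβ β z.2 * ((-1:ℝ)^(m - σ.card) *
        (marg N f σ.card (restrictF (Function.update Zm ℓ z) σ) /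
         Mprod β (restrictF (Function.update Zm ℓ z) σ)))) := by
    intro σ _
    by_cases h : ℓ ∈ σ
    · exact (hZm σ h).1
    · exact (hnm σ h).1
  have hcum : (fun z : Dom => Mβ β z.2 * cumul β N f m (Function.update Zm ℓ z))
      = fun z : Dom => ∑ σ ∈ S, Mβ β z.2 * ((-1:ℝ)^(m - σ.card) *
        (marg N f σ.card (restrictF (Function.update Zm ℓ z) σ) /
         Mprod β (restrictF (Function.update Zm ℓ z) σ))) := by
    funext z
    rw [cumul, Finset.mul_sum]
  rw [hcum, integral_finset_sum S hIint]
  -- now the combinatorial cancellation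
  rw [← Finset.sum_filter_add_sum_filter_not S (fun σ => ℓ ∈ σ)]
  set C : Finset (Finset (Fin m)) :=
    Finset.univ.powerset.filter (fun τ : Finset (Fin m) => ℓ ∉ τ) with hC
  have hBsum : ∑ σ ∈ S.filter (fun σ => ℓ ∈ σ),
      ∫ z : Dom, Mβ β z.2 * ((-1:ℝ)^(m - σ.card) *
        (marg N f σ.card (restrictF (Function.update Zm ℓ z) σ) /
         Mprod β (restrictF (Function.update Zm ℓ z) σ)))
      = ∑ τ ∈ C, (-1:ℝ)^(m - (τ.card + 1)) * u τ := by
    refine Finset.sum_nbij' (fun σ => σ.erase ℓ) (fun τ => insert ℓ τ) ?_ ?_ ?_ ?_ ?_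
    · intro σ hσ
      rw [hC, Finset.mem_filter]
      exact ⟨Finset.mem_powerset.2 (Finset.subset_univ _), Finset.notMem_erase ℓ σ⟩
    · intro τ hτ
      rw [hC, Finset.mem_filter] at hτ
      rw [hS, Finset.mem_filter, Finset.mem_filter]
      exact ⟨⟨Finset.mem_powerset.2 (Finset.subset_univ _), Finset.insert_nonempty ℓ τ⟩,
        Finset.mem_insert_self ℓ τ⟩
    · intro σ hσ
      rw [Finset.mem_filter] at hσ
      exact Finset.insert_erase hσ.2
    · intro τ hτ
      rw [hC, Finset.mem_filter] at hτ
      exact Finset.erase_insert hτ.2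
    · intro σ hσ
      rw [Finset.mem_filter] at hσ
      have hme : (σ.erase ℓ).card + 1 = σ.card := Finset.card_erase_add_one hσ.2
      rw [(hZm σ hσ.2).2, hme]
  rw [hBsum]
  have h0C : (∅ : Finset (Fin m)) ∈ C := by
    rw [hC, Finset.mem_filter]
    exact ⟨Finset.mem_powerset.2 (Finset.empty_subset _), Finset.notMem_empty ℓ⟩
  have h0 : (-1:ℝ)^(m - ((∅ : Finset (Fin m)).card + 1)) * u ∅ = 0 := by
    have : u ∅ = 0 := by
      rw [hu]
      beta_reduce
      rw [show marg N f (∅ : Finset (Fin m)).card (restrictF Zm ∅) = 0 from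
        marg_zero (by omega) hmean (restrictF Zm ∅), zero_div]
    rw [this, mul_zero]
  rw [← Finset.sum_erase C h0]
  have hCA : C.erase ∅ = S.filter (fun σ => ¬ ℓ ∈ σ) := by
    ext τ
    rw [Finset.mem_erase, hC, Finset.mem_filter, Finset.mem_filter, hS, Finset.mem_filter]
    constructor
    · rintro ⟨hne, hpow, hℓτ⟩
      exact ⟨⟨hpow, Finset.nonempty_iff_ne_empty.2 hne⟩, hℓτ⟩
    · rintro ⟨⟨hpow, hne⟩, hℓτ⟩
      exact ⟨Finset.nonempty_iff_ne_empty.1 hne, hpow, hℓτ⟩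
  rw [hCA]
  have hval : ∀ σ ∈ S.filter (fun σ => ¬ ℓ ∈ σ),
      ∫ z : Dom, Mβ β z.2 * ((-1:ℝ)^(m - σ.card) *
        (marg N f σ.card (restrictF (Function.update Zm ℓ z) σ) /
         Mprod β (restrictF (Function.update Zm ℓ z) σ)))
      = (-1:ℝ)^(m - σ.card) * u σ := by
    intro σ hσ
    rw [Finset.mem_filter] at hσ
    exact (hnm σ hσ.2).2
  rw [Finset.sum_congr rfl hval, ← Finset.sum_add_distrib]
  refine Finset.sum_eq_zero ?_
  intro τ hτ
  rw [Finset.mem_filter, hS, Finset.mem_filter] at hτ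
  have hcard : τ.card < m := by
    have hsub : τ ⊆ Finset.univ.erase ℓ := by
      intro x hx
      rw [Finset.mem_erase]
      refine ⟨?_, Finset.mem_univ x⟩
      intro h
      exact hτ.2 (h ▸ hx)
    have := Finset.card_le_card hsub
    rw [Finset.card_erase_of_mem (Finset.mem_univ ℓ)] at this
    simp only [Finset.card_univ, Fintype.card_fin] at this
    omega
  have hexp : m - τ.card = (m - (τ.card + 1)) + 1 := by omega
  rw [hexp, pow_succ]
  ring
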